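/- Let α ∈ (0,1). The map x ↦ q_α(x) − x is decreasing on [0,∞), equals z_{1−α/2} at x = 0, and converges to z_{1−α} as x → ∞. -/

import Mathlib

open MeasureTheory ProbabilityTheory

/-- The standard normal cumulative distribution function `Φ`. -/
noncomputable def Phi (x : ℝ) : ℝ := (gaussianReal 0 1 (Set.Iic x)).toReal

open Filter

private lemma Phi_eq_cdf : Phi = cdf (gaussianReal 0 1) := by
  funext x
  rw [cdf_eq_real, measureReal_def]; rfl

private lemma Phi_eq_int (x : ℝ) : Phi x = ∫ t in Set.Iic x, gaussianPDFReal 0 1 t := by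
  rw [Phi, gaussianReal_apply_eq_integral 0 one_ne_zero, ENNReal.toReal_ofReal]
  exact setIntegral_nonneg measurableSet_Iic fun t _ => gaussianPDFReal_nonneg 0 1 t

private lemma Phi_sub (x y : ℝ) (hxy : x ≤ y) :
    Phi y - Phi x = ∫ t in Set.Ioc x y, gaussianPDFReal 0 1 t := by
  rw [Phi_eq_int, Phi_eq_int, ← Set.Iic_sdiff_Iic,
    integral_diff measurableSet_Iic ((integrable_gaussianPDFReal 0 1).integrableOn)
      (Set.Iic_subset_Iic.2 hxy)]

private lemma Phi_strictMono : StrictMono Phi := by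
  intro x y hxy
  have h := Phi_sub x y hxy.le
  have hpos : 0 < ∫ t in Set.Ioc x y, gaussianPDFReal 0 1 t := by
    rw [setIntegral_pos_iff_support_of_nonneg_ae
      (ae_of_all _ fun t => gaussianPDFReal_nonneg 0 1 t)
      ((integrable_gaussianPDFReal 0 1).integrableOn)]
    have hs : Function.support (gaussianPDFReal 0 1) = Set.univ := by
      ext t
      simp [Function.mem_support, (gaussianPDFReal_pos 0 1 t one_ne_zero).ne']
    rw [hs, Set.univ_inter, Real.volume_Ioc]
    simp [hxy]
  linarith

private lemma Phi_mono : Monotone Phi := Phi_strictMono.monotone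

private lemma Phi_continuous : Continuous Phi := by
  have h : ∀ x : ℝ, Phi x = Phi 0 + ∫ t in (0:ℝ)..x, gaussianPDFReal 0 1 t := by
    intro x
    rcases le_total 0 x with h | h
    · rw [intervalIntegral.integral_of_le h, ← Phi_sub 0 x h]; ring
    · rw [intervalIntegral.integral_symm, intervalIntegral.integral_of_le h, ← Phi_sub x 0 h]
      ring
  have : Phi = fun x => Phi 0 + ∫ t in (0:ℝ)..x, gaussianPDFReal 0 1 t := funext h
  rw [this]
  exact continuous_const.add
    (intervalIntegral.continuous_primitive
      (fun _ _ => (integrable_gaussianPDFReal 0 1).intervalIntegrable) 0)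

private lemma Phi_nonneg (x : ℝ) : 0 ≤ Phi x := by rw [Phi_eq_cdf]; exact cdf_nonneg _ _

private lemma Phi_tendsto_atBot : Filter.Tendsto Phi atBot (nhds 0) := by
  rw [Phi_eq_cdf]; exact tendsto_cdf_atBot _

private lemma Phi_neg (x : ℝ) : Phi (-x) = 1 - Phi x := by
  have hmap : (gaussianReal 0 1).map (fun t : ℝ => (-1 : ℝ) * t) = gaussianReal 0 1 := by
    rw [gaussianReal_map_const_mul]
    norm_num
  have h1 : gaussianReal 0 1 (Set.Iic (-x)) = gaussianReal 0 1 (Set.Ici x) := by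
    conv_lhs => rw [← hmap]
    rw [Measure.map_apply (by fun_prop) measurableSet_Iic]
    congr 1
    ext t
    simp
  have hsing : gaussianReal 0 1 {x} = 0 :=
    gaussianReal_absolutelyContinuous 0 one_ne_zero (Real.volume_singleton)
  have h2 : gaussianReal 0 1 (Set.Ici x) = gaussianReal 0 1 (Set.Ioi x) := by
    refine le_antisymm ?_ (measure_mono Set.Ioi_subset_Ici_self)
    calc gaussianReal 0 1 (Set.Ici x) = gaussianReal 0 1 (Set.Ioi x ∪ {x}) := by
          rw [Set.Ioi_union_left]
      _ ≤ gaussianReal 0 1 (Set.Ioi x) + gaussianReal 0 1 {x} := measure_union_le _ _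
      _ = gaussianReal 0 1 (Set.Ioi x) := by rw [hsing, add_zero]
  have h3 : gaussianReal 0 1 (Set.Ioi x) = 1 - gaussianReal 0 1 (Set.Iic x) := by
    rw [← Set.compl_Iic, measure_compl measurableSet_Iic (measure_ne_top _ _), measure_univ]
  rw [Phi, Phi, h1, h2, h3, ENNReal.toReal_sub_of_le prob_le_one ENNReal.one_ne_top,
    ENNReal.toReal_one]

private lemma Phi_lt_iff {x y : ℝ} : Phi x < Phi y ↔ x < y := Phi_strictMono.lt_iff_lt

private lemma Phi_le_iff {x y : ℝ} : Phi x ≤ Phi y ↔ x ≤ y := Phi_strictMono.le_iff_le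

/-- The map `x ↦ q_α(x) - x` is decreasing on `[0,∞)`, equals `z_{1-α/2}` at `x = 0`, and
converges to `z_{1-α}` as `x → ∞`, where `z_p = Φ⁻¹(p)` and `q_α(x)` is the `(1-α)`-quantile
of `|Z + x|` for `Z` standard normal. -/
theorem quantile_abs_normal_gap_antitone (α : ℝ) (hα : α ∈ Set.Ioo (0 : ℝ) 1)
    (qa : ℝ → ℝ)
    (hqa : ∀ b : ℝ, 0 ≤ qa b ∧ Phi (qa b - b) - Phi (-qa b - b) = 1 - α)
    (z₁ z₂ : ℝ) (hz₁ : Phi z₁ = 1 - α) (hz₂ : Phi z₂ = 1 - α / 2) :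
    AntitoneOn (fun x => qa x - x) (Set.Ici (0 : ℝ)) ∧
    qa 0 - 0 = z₂ ∧
    Tendsto (fun x => qa x - x) atTop (nhds z₁) := by
  obtain ⟨hα0, hα1⟩ := hα
  have key : ∀ b : ℝ, Phi (qa b - b) - Phi (-(qa b - b) - 2*b) = 1 - α := by
    intro b
    have h := (hqa b).2
    have e : -qa b - b = -(qa b - b) - 2*b := by ring
    rwa [e] at h
  have hlow : ∀ x : ℝ, z₁ ≤ qa x - x := by
    intro x
    rw [← Phi_le_iff, hz₁]
    have h := key x
    have h2 := Phi_nonneg (-(qa x - x) - 2*x)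
    linarith
  have hant : AntitoneOn (fun x => qa x - x) (Set.Ici (0:ℝ)) := by
    intro x hx y hy hxy
    by_contra hcon
    push_neg at hcon
    have h1 : Phi (qa x - x) < Phi (qa y - y) := Phi_lt_iff.2 hcon
    have h2 : Phi (-(qa y - y) - 2*y) ≤ Phi (-(qa x - x) - 2*y) := Phi_le_iff.2 (by linarith)
    have h3 : Phi (-(qa x - x) - 2*y) ≤ Phi (-(qa x - x) - 2*x) :=
      Phi_le_iff.2 (by simp only [Set.mem_Ici] at hx hy; linarith)
    have kx := key x
    have ky := key y
    linarith
  refine ⟨hant, ?_, ?_⟩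
  · have h := (hqa 0).2
    rw [sub_zero, sub_zero, Phi_neg] at h
    have hP : Phi (qa 0) = 1 - α/2 := by linarith
    rw [sub_zero]
    exact Phi_strictMono.injective (by rw [hP, hz₂])
  · rw [tendsto_order]
    constructor
    · intro a ha
      filter_upwards with x
      exact lt_of_lt_of_le ha (hlow x)
    · intro a ha
      have hlin : Tendsto (fun x : ℝ => -z₁ - 2*x) atTop atBot := by
        have h2 : Tendsto (fun x : ℝ => (-2) * x) atTop atBot :=
          Tendsto.const_mul_atTop_of_neg (by norm_num) tendsto_id
        have : (fun x : ℝ => -z₁ - 2*x) = fun x : ℝ => -z₁ + (-2) * x := by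
          funext x; ring
        rw [this]
        exact tendsto_atBot_add_const_left _ _ h2
      have hT : Tendsto (fun x : ℝ => Phi (-z₁ - 2*x)) atTop (nhds 0) :=
        Phi_tendsto_atBot.comp hlin
      have hgap : 0 < Phi a - Phi z₁ := sub_pos.2 (Phi_lt_iff.2 ha)
      filter_upwards [hT.eventually_lt_const hgap] with x hx
      have h1 : Phi (-(qa x - x) - 2*x) ≤ Phi (-z₁ - 2*x) :=
        Phi_le_iff.2 (by have := hlow x; linarith)
      have kx := key x
      have : Phi (qa x - x) < Phi a := by linarith
      exact Phi_lt_iff.1 this
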